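/- Let f : ℝⁿ → ℝ ∪ {+∞} be convex, proper, lower semicontinuous, finite at x̄ with 0 ∈ ∂f(x̄), and suppose its second subderivative d²f(x̄ | 0) is proper with subdifferential satisfying ∂[½ d²f(x̄|0)] = D(∂f)(x̄|0). If [D(∂f)(x̄|0)]^{-1}(0) = {0}, then d²f(x̄|0)(w) > 0 for all w ≠ 0. -/

import Mathlib

open Filter Topology
open scoped ENNReal NNReal Pointwise

noncomputable section

abbrev En (n : ℕ) := EuclideanSpace ℝ (Fin n)

/-- Regular (Fréchet) subgradients of an extended-real-valued function. -/
def RegSubgrad {n : ℕ} (f : En n → EReal) (x : En n) : Set (En n) :=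
  {v | ∀ ε : ℝ, 0 < ε → ∃ δ : ℝ, 0 < δ ∧ ∀ u : En n, ‖u - x‖ < δ → u ≠ x →
      f x + (((inner ℝ v (u - x) : ℝ) - ε * ‖u - x‖ : ℝ) : EReal) ≤ f u}

/-- Limiting (Mordukhovich) subgradients. -/
def LimSubgrad {n : ℕ} (f : En n → EReal) (x : En n) : Set (En n) :=
  {v | ∃ xk vk : ℕ → En n,
      Tendsto xk atTop (nhds x) ∧ Tendsto vk atTop (nhds v) ∧
      Tendsto (fun k => f (xk k)) atTop (nhds (f x)) ∧
      ∀ k, vk k ∈ RegSubgrad f (xk k)}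

/-- Outer limiting subgradients: limits of limiting subgradients taken at nearby
points where the function value is strictly larger and converges to `f x`. -/
def OuterSubgrad {n : ℕ} (f : En n → EReal) (x : En n) : Set (En n) :=
  {v | ∃ xk vk : ℕ → En n,
      Tendsto xk atTop (nhds x) ∧ Tendsto vk atTop (nhds v) ∧
      Tendsto (fun k => f (xk k)) atTop (nhds (f x)) ∧
      (∀ k, f x < f (xk k)) ∧ ∀ k, vk k ∈ LimSubgrad f (xk k)}

/-- Distance from the origin to a set (`∞` for the empty set). -/
def DistZero {n : ℕ} (S : Set (En n)) : ℝ≥0∞ := EMetric.infEdist 0 S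

/-- `f` is locally lower semicontinuous at `x`. -/
def LocallyLsc {n : ℕ} (f : En n → EReal) (x : En n) : Prop :=
  ∃ ε : ℝ, 0 < ε ∧ ∀ α : ℝ, (α : EReal) ≤ f x + (ε : ℝ) →
    IsClosed {y : En n | ‖y - x‖ ≤ ε ∧ f y ≤ (α : ℝ)}

/-- Prox-regularity of `f` at `x` for the subgradient `0`, where `c = f x`. -/
def ProxRegularAt {n : ℕ} (f : En n → EReal) (x : En n) (c : ℝ) : Prop :=
  LocallyLsc f x ∧ (0 : En n) ∈ LimSubgrad f x ∧
    ∃ ε : ℝ, 0 < ε ∧ ∃ ρ : ℝ, 0 ≤ ρ ∧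
      ∀ y v : En n, v ∈ LimSubgrad f y → ‖v‖ < ε → ‖y - x‖ < ε →
        f y < (c : ℝ) + (ε : ℝ) →
        ∀ x' : En n, ‖x' - x‖ ≤ ε →
          f y + (((inner ℝ v (x' - y) : ℝ) - ρ / 2 * ‖x' - y‖ ^ 2 : ℝ) : EReal) ≤ f x'

/-- The graphical derivative `D(∂f)(x | 0)` of the subgradient mapping at `(x, 0)`:
`z ∈ D(∂f)(x|0)(w)` iff `(w, z)` is tangent to `gph ∂f` at `(x, 0)`. -/
def GraphDerivSubdiff {n : ℕ} (f : En n → EReal) (x : En n) (w : En n) : Set (En n) :=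
  {z | ∃ (t : ℕ → ℝ) (wk zk : ℕ → En n),
      Tendsto t atTop (nhdsWithin 0 (Set.Ioi 0)) ∧
      Tendsto wk atTop (nhds w) ∧ Tendsto zk atTop (nhds z) ∧
      ∀ k, t k • zk k ∈ LimSubgrad f (x + t k • wk k)}

/-- The second subderivative `d²f(x | 0)`. -/
def SecondSubderiv {n : ℕ} (f : En n → EReal) (x : En n) (w : En n) : EReal :=
  Filter.liminf (fun p : ℝ × En n =>
      (((p.1 ^ 2 / 2)⁻¹ : ℝ) : EReal) * (f (x + p.1 • p.2) - f x))
    ((nhdsWithin 0 (Set.Ioi 0)) ×ˢ (nhds w))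

lemma key_reg {n : ℕ} (f : En n → EReal)
    (hconv : ∀ x y : En n, ∀ a b : ℝ, 0 ≤ a → 0 ≤ b → a + b = 1 →
      f (a • x + b • y) ≤ ((a : ℝ) : EReal) * f x + ((b : ℝ) : EReal) * f y)
    (x u v : En n) (a r : ℝ)
    (hfa : f x = (a : ℝ)) (hfu : f u = (r : ℝ))
    (hv : v ∈ RegSubgrad f x) :
    a + (inner ℝ v (u - x) : ℝ) ≤ r := by
  rcases eq_or_ne u x with rfl | hux
  · have : a = r := by
      have := hfa.symm.trans hfu
      exact_mod_cast this
    simp [this]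
  have hnorm : (0:ℝ) < ‖u - x‖ := by
    rw [norm_pos_iff]
    exact sub_ne_zero_of_ne hux
  have H : ∀ ε : ℝ, 0 < ε → (inner ℝ v (u - x) : ℝ) ≤ r - a + ε * ‖u - x‖ := by
    intro ε hε
    obtain ⟨δ, hδ, hδ2⟩ := hv ε hε
    set t : ℝ := min (1/2) (δ / (2 * ‖u - x‖)) with ht
    have ht0 : 0 < t := lt_min (by norm_num) (by positivity)
    have ht1 : t ≤ 1/2 := min_le_left _ _
    have htδ : t * ‖u - x‖ < δ := by
      have h1 : t ≤ δ / (2 * ‖u - x‖) := min_le_right _ _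
      have h2 : t * ‖u - x‖ ≤ δ / 2 := by
        calc t * ‖u - x‖ ≤ δ / (2 * ‖u - x‖) * ‖u - x‖ := by gcongr
          _ = δ / 2 := by field_simp
      linarith
    set ut : En n := x + t • (u - x) with hut
    have hutx : ut - x = t • (u - x) := by simp [hut]
    have hne : ut ≠ x := by
      intro h
      have : t • (u - x) = 0 := by
        have := congrArg (· - x) h
        simpa [hut] using this
      rcases smul_eq_zero.mp this with h | h
      · exact ht0.ne' h
      · exact hux (sub_eq_zero.mp h)
    have hnut : ‖ut - x‖ = t * ‖u - x‖ := by
      rw [hutx, norm_smul, Real.norm_eq_abs, abs_of_pos ht0]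
    have h1 := hδ2 ut (by rw [hnut]; exact htδ) hne
    have h2 := hconv x u (1 - t) t (by linarith) ht0.le (by ring)
    have hcomb : (1 - t) • x + t • u = ut := by
      rw [hut]; module
    rw [hcomb, hfa, hfu] at h2
    rw [hfa, hutx, real_inner_smul_right, norm_smul, Real.norm_eq_abs, abs_of_pos ht0] at h1
    have h3 : ((a : ℝ) : EReal) + ((t * (inner ℝ v (u-x):ℝ) - ε * (t * ‖u - x‖) : ℝ) : EReal)
        ≤ (((1 - t) * a + t * r : ℝ) : EReal) := by
      refine h1.trans (h2.trans_eq ?_)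
      push_cast
      ring
    rw [← EReal.coe_add] at h3
    have h4 : a + (t * (inner ℝ v (u-x):ℝ) - ε * (t * ‖u - x‖)) ≤ (1 - t) * a + t * r := by
      exact_mod_cast h3
    nlinarith [ht0]
  by_contra hcon
  push_neg at hcon
  have hgap : (0:ℝ) < (inner ℝ v (u - x) : ℝ) - (r - a) := by linarith
  have hd : (0:ℝ) < ((inner ℝ v (u - x) : ℝ) - (r - a)) / (2 * ‖u - x‖) :=
    div_pos hgap (by positivity)
  have := H _ hd
  have hEq : ((inner ℝ v (u - x) : ℝ) - (r - a)) / (2 * ‖u - x‖) * ‖u - x‖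
      = ((inner ℝ v (u - x) : ℝ) - (r - a)) / 2 := by
    field_simp
  rw [hEq] at this
  linarith

/-- for a convex, proper, lsc function `f` with `0 ∈ ∂f(xb)`,
proper second subderivative satisfying `∂[½ d²f(xb|0)] = D(∂f)(xb|0)`, the
nonsingularity of `D(∂f)(xb|0)` forces `d²f(xb|0)(w) > 0` for all `w ≠ 0`. -/
theorem statement_18 {n : ℕ} (f : En n → EReal) (hbot : ∀ x, f x ≠ ⊥)
    (hne : ∃ x, f x ≠ ⊤) (hlsc : LowerSemicontinuous f)
    (hconv : ∀ x y : En n, ∀ a b : ℝ, 0 ≤ a → 0 ≤ b → a + b = 1 →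
      f (a • x + b • y) ≤ ((a : ℝ) : EReal) * f x + ((b : ℝ) : EReal) * f y)
    (xb : En n) (c : ℝ) (hfc : f xb = (c : ℝ))
    (hsub : (0 : En n) ∈ LimSubgrad f xb)
    (hproper : (∀ w, SecondSubderiv f xb w ≠ ⊥) ∧ ∃ w, SecondSubderiv f xb w ≠ ⊤)
    (hformula : ∀ w : En n,
      LimSubgrad (fun u => (((1 / 2 : ℝ)) : EReal) * SecondSubderiv f xb u) w =
        GraphDerivSubdiff f xb w)
    (hnonsing : ∀ w : En n, (0 : En n) ∈ GraphDerivSubdiff f xb w → w = 0) :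
    ∀ w : En n, w ≠ 0 → (0 : EReal) < SecondSubderiv f xb w := by
  -- Step 1: xb is a global minimizer of f.
  have hmin : ∀ u : En n, (c : EReal) ≤ f u := by
    intro u
    rcases eq_or_ne (f u) ⊤ with hu | hu
    · rw [hu]; exact le_top
    have hur : f u = ((f u).toReal : EReal) := (EReal.coe_toReal hu (hbot u)).symm
    set r : ℝ := (f u).toReal
    obtain ⟨xk, vk, hx, hv, hf, hreg⟩ := hsub
    rw [hfc] at hf
    have hev : ∀ᶠ k in atTop, f (xk k) < ⊤ :=
      hf.eventually_lt_const (EReal.coe_lt_top c)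
    have hineq : ∀ᶠ k in atTop,
        (f (xk k)).toReal + (inner ℝ (vk k) (u - xk k) : ℝ) ≤ r := by
      filter_upwards [hev] with k hk
      exact key_reg f hconv (xk k) u (vk k) (f (xk k)).toReal r
        ((EReal.coe_toReal hk.ne (hbot _)).symm) hur (hreg k)
    have htR : Tendsto (fun k => (f (xk k)).toReal) atTop (nhds c) := by
      have := (EReal.tendsto_toReal (EReal.coe_ne_top c) (EReal.coe_ne_bot c)).comp hf
      exact this
    have hti : Tendsto (fun k => (inner ℝ (vk k) (u - xk k) : ℝ)) atTop
        (nhds (inner ℝ (0 : En n) (u - xb) : ℝ)) :=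
      hv.inner (tendsto_const_nhds.sub hx)
    have hsum : Tendsto (fun k => (f (xk k)).toReal + (inner ℝ (vk k) (u - xk k) : ℝ))
        atTop (nhds c) := by
      have := htR.add hti
      simpa [inner_zero_left] using this
    have hcr : c ≤ r := le_of_tendsto hsum hineq
    rw [hur]
    exact_mod_cast hcr
  -- Step 2: the second subderivative is nonnegative everywhere.
  have hge : ∀ w : En n, (0 : EReal) ≤ SecondSubderiv f xb w := by
    intro w
    refine Filter.le_liminf_of_le (by isBoundedDefault) (Filter.Eventually.of_forall ?_)
    intro p
    refine mul_nonneg ?_ ?_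
    · exact_mod_cast (by positivity : (0:ℝ) ≤ (p.1 ^ 2 / 2)⁻¹)
    · rw [hfc]
      rw [EReal.le_sub_iff_add_le (Or.inl (EReal.coe_ne_bot c)) (Or.inl (EReal.coe_ne_top c))]
      rw [zero_add]
      exact hmin _
  -- Step 3: the contradiction argument.
  intro w hw
  by_contra hle
  push_neg at hle
  have h0 : SecondSubderiv f xb w = 0 := le_antisymm hle (hge w)
  have hreg0 : (0 : En n) ∈ RegSubgrad
      (fun u => (((1 / 2 : ℝ)) : EReal) * SecondSubderiv f xb u) w := by
    intro ε hε
    refine ⟨1, one_pos, fun u _ _ => ?_⟩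
    have hL : (((inner ℝ (0 : En n) (u - w) : ℝ) - ε * ‖u - w‖ : ℝ) : EReal) ≤ 0 := by
      have : ((inner ℝ (0 : En n) (u - w) : ℝ) - ε * ‖u - w‖ : ℝ) ≤ 0 := by
        simp only [inner_zero_left]
        have : (0:ℝ) ≤ ε * ‖u - w‖ := by positivity
        linarith
      exact_mod_cast this
    calc (((1 / 2 : ℝ)) : EReal) * SecondSubderiv f xb w
          + (((inner ℝ (0 : En n) (u - w) : ℝ) - ε * ‖u - w‖ : ℝ) : EReal)
        ≤ 0 := by rw [h0, mul_zero, zero_add]; exact hL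
      _ ≤ (((1 / 2 : ℝ)) : EReal) * SecondSubderiv f xb u :=
          mul_nonneg (by norm_num) (hge u)
  have hlim : (0 : En n) ∈ LimSubgrad
      (fun u => (((1 / 2 : ℝ)) : EReal) * SecondSubderiv f xb u) w :=
    ⟨fun _ => w, fun _ => 0, tendsto_const_nhds, tendsto_const_nhds,
      tendsto_const_nhds, fun _ => hreg0⟩
  rw [hformula w] at hlim
  exact hw (hnonsing w hlim)
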